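/- For all s ≥ 1, c_s(x) + c_{s-1}(x) = ∏_{k=1}^{s} (x - 2·cos(2kπ/(2s+1))), as polynomials over ℝ. -/

import Mathlib

open Polynomial Real

/-- `c n` is the paper's `c_{n-1}`, so `c 0 = c_{-1} = 0`. -/
noncomputable def c : ℕ → Polynomial ℝ
  | 0 => 0
  | 1 => 1
  | (n + 2) => X * c (n + 1) - c n

lemma c_eval_cos (θ : ℝ) : ∀ n : ℕ,
    Real.sin θ * (c n).eval (2 * Real.cos θ) = Real.sin (n * θ)
  | 0 => by simp [c]
  | 1 => by simp [c]
  | (n + 2) => by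
    have h1 := c_eval_cos θ (n + 1)
    have h2 := c_eval_cos θ n
    simp only [c, eval_sub, eval_mul, eval_X]
    push_cast
    push_cast at h1 h2
    have e1 : ((n : ℝ) + 2) * θ = ((n : ℝ) + 1) * θ + θ := by ring
    have e2 : (n : ℝ) * θ = ((n : ℝ) + 1) * θ - θ := by ring
    rw [e1, Real.sin_add]
    rw [e2, Real.sin_sub] at h2
    linear_combination 2 * Real.cos θ * h1 - h2

lemma c_monic : ∀ n : ℕ, (c (n + 1)).Monic ∧ (c (n + 1)).natDegree = n
  | 0 => ⟨by simp [c, monic_one], by simp [c]⟩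
  | 1 => ⟨by simp [c, monic_X], by simp [c]⟩
  | (n + 2) => by
    obtain ⟨hmA, hdA⟩ := c_monic (n + 1)
    obtain ⟨hmB, hdB⟩ := c_monic n
    have hXm : (X * c (n + 2)).Monic := monic_X.mul hmA
    have hXd : (X * c (n + 2)).natDegree = n + 2 := by
      rw [natDegree_mul X_ne_zero hmA.ne_zero, natDegree_X, hdA]; omega
    have hlt : (c (n + 1)).degree < (X * c (n + 2)).degree := by
      rw [degree_eq_natDegree hmB.ne_zero, degree_eq_natDegree hXm.ne_zero, hXd, hdB]
      exact_mod_cast (by omega : n < n + 2)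
    have hceq : c (n + 2 + 1) = X * c (n + 2) - c (n + 1) := rfl
    refine ⟨?_, ?_⟩
    · rw [hceq]; exact hXm.sub_of_left hlt
    · rw [hceq, natDegree_sub_eq_left_of_natDegree_lt, hXd]
      rw [hXd, hdB]; omega

theorem stmt_8 (s : ℕ) (hs : 1 ≤ s) :
    c (s + 1) + c s =
      ∏ k ∈ Finset.range s,
        (X - Polynomial.C (2 * Real.cos ((2 * ((k : ℝ) + 1)) * π / (2 * s + 1)))) := by
  obtain ⟨s', rfl⟩ : ∃ s', s = s' + 1 := ⟨s - 1, by omega⟩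
  set θ : ℕ → ℝ := fun k => (2 * ((k : ℝ) + 1)) * π / (2 * ((s' : ℕ) + 1 : ℕ) + 1) with hθ
  have hθk : ∀ k : ℕ, θ k = (2 * ((k : ℝ) + 1)) * π / (2 * (s' : ℝ) + 3) := by
    intro k; rw [hθ]; push_cast; ring_nf
  have hθmem : ∀ k < s' + 1, θ k ∈ Set.Ioo 0 π := by
    intro k hk
    have hπ := Real.pi_pos
    rw [hθk]
    constructor
    · apply div_pos (by positivity) (by positivity)
    · rw [div_lt_iff₀ (by positivity)]
      have : (k : ℝ) + 1 ≤ (s' : ℝ) + 1 := by exact_mod_cast hk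
      nlinarith
  set L : Polynomial ℝ := c (s' + 1 + 1) + c (s' + 1) with hLdef
  set R : Polynomial ℝ := ∏ k ∈ Finset.range (s' + 1),
      (X - Polynomial.C (2 * Real.cos (θ k))) with hRdef
  obtain ⟨hm1, hd1⟩ := c_monic (s' + 1)
  obtain ⟨hm2, hd2⟩ := c_monic s'
  have hL : L.Monic := by
    apply hm1.add_of_left
    rw [degree_eq_natDegree hm1.ne_zero, degree_eq_natDegree hm2.ne_zero, hd1, hd2]
    exact_mod_cast (by omega : s' < s' + 1)
  have hLd : L.natDegree = s' + 1 := by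
    rw [hLdef, natDegree_add_eq_left_of_natDegree_lt, hd1]
    rw [hd1, hd2]; omega
  have hR : R.Monic := monic_prod_of_monic _ _ (fun k _ => monic_X_sub_C _)
  have hRd : R.natDegree = s' + 1 := by
    rw [hRdef, natDegree_prod _ _ (fun k _ => (monic_X_sub_C _).ne_zero)]
    simp only [natDegree_X_sub_C]
    simp
  have hpd : (L - R).degree < ((s' + 1 : ℕ) : WithBot ℕ) := by
    have h := Polynomial.degree_sub_lt
      (p := L) (q := R)
      (by rw [degree_eq_natDegree hL.ne_zero, degree_eq_natDegree hR.ne_zero, hLd, hRd])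
      hL.ne_zero (by rw [hL.leadingCoeff, hR.leadingCoeff])
    rwa [degree_eq_natDegree hL.ne_zero, hLd] at h
  have hroot : ∀ k : Fin (s' + 1), (L - R).eval (2 * Real.cos (θ k)) = 0 := by
    intro ⟨k, hk⟩
    simp only [eval_sub, eval_add, hLdef, hRdef]
    have hprod : (∏ j ∈ Finset.range (s' + 1),
        (X - Polynomial.C (2 * Real.cos (θ j)))).eval (2 * Real.cos (θ k)) = 0 := by
      rw [eval_prod]
      apply Finset.prod_eq_zero (Finset.mem_range.mpr hk)
      simp
    rw [hprod, sub_zero]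
    have hsin : Real.sin (θ k) ≠ 0 := by
      obtain ⟨h1, h2⟩ := hθmem k hk
      exact ne_of_gt (Real.sin_pos_of_pos_of_lt_pi h1 h2)
    have key : Real.sin (θ k) * ((c (s' + 1 + 1)).eval (2 * Real.cos (θ k)) +
        (c (s' + 1)).eval (2 * Real.cos (θ k))) = 0 := by
      rw [mul_add, c_eval_cos, c_eval_cos]
      have e1 : ((s' + 1 + 1 : ℕ) : ℝ) * θ k = (2 * (s' : ℝ) + 3) / 2 * θ k + θ k / 2 := by
        push_cast; ring
      have e2 : ((s' + 1 : ℕ) : ℝ) * θ k = (2 * (s' : ℝ) + 3) / 2 * θ k - θ k / 2 := by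
        push_cast; ring
      rw [e1, e2, Real.sin_add, Real.sin_sub]
      have hval : (2 * (s' : ℝ) + 3) / 2 * θ k = ((k : ℝ) + 1) * π := by
        rw [hθk]
        have h0 : (2 * (s' : ℝ) + 3) ≠ 0 := by positivity
        field_simp
      rw [hval]
      have hz : Real.sin (((k : ℝ) + 1) * π) = 0 := by
        have : ((k : ℝ) + 1) * π = ((k + 1 : ℤ) : ℝ) * π := by push_cast; ring
        rw [this, Real.sin_int_mul_pi]
      rw [hz]
      ring
    rcases mul_eq_zero.mp key with h | h
    · exact absurd h hsin
    · exact h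
  have hinj : Function.Injective (fun k : Fin (s' + 1) => 2 * Real.cos (θ k)) := by
    intro a b hab
    have ha := hθmem a a.2
    have hb := hθmem b b.2
    have hcos : Real.cos (θ a) = Real.cos (θ b) := by
      simp only at hab; linarith
    have hθab : θ a = θ b := Real.injOn_cos ⟨ha.1.le, ha.2.le⟩ ⟨hb.1.le, hb.2.le⟩ hcos
    rw [hθk, hθk] at hθab
    have hπ := Real.pi_pos
    have hden : (2 * (s' : ℝ) + 3) ≠ 0 := by positivity
    field_simp at hθab
    have h : (((a : ℕ) : ℝ)) = ((b : ℕ) : ℝ) := by linarith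
    exact Fin.ext (by exact_mod_cast h)
  have hp0 : L - R = 0 := by
    apply Polynomial.eq_zero_of_natDegree_lt_card_of_eval_eq_zero (L - R) hinj hroot
    rw [Fintype.card_fin]
    rcases eq_or_ne (L - R) 0 with h | h
    · rw [h]; simp
    · have := (degree_eq_natDegree h) ▸ hpd
      exact_mod_cast this
  have hfin : L = R := sub_eq_zero.mp hp0
  rw [hLdef, hRdef] at hfin
  convert hfin using 3
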